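/- Fix x ∈ (0,1) and d with 0 < d < min(x, 1−x). Then there exists B < 1 such that for all α ∈ ℕ₊, ∫_{D_>} g(t,x)^α dt ≤ B^α, where D_> = {t ∈ [0,1] : |t − x| > d} and g(t,x) = (t/x)^x · ((1−t)/(1−x))^{1−x}. -/

import Mathlib

open MeasureTheory

/-- `g(t,x) = (t/x)^x · ((1−t)/(1−x))^(1−x)` (real powers, so `g(0,x) = g(1,x) = 0`
for `x ∈ (0,1)`). -/
noncomputable def gFun (x t : ℝ) : ℝ :=
  (t / x) ^ x * ((1 - t) / (1 - x)) ^ (1 - x)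

lemma gFun_nonneg {x t : ℝ} (hx : x ∈ Set.Ioo (0:ℝ) 1) (ht : t ∈ Set.Icc (0:ℝ) 1) :
    0 ≤ gFun x t := by
  apply mul_nonneg <;> apply Real.rpow_nonneg
  · exact div_nonneg ht.1 hx.1.le
  · exact div_nonneg (by linarith [ht.2]) (by linarith [hx.2])

lemma gFun_lt_one {x t : ℝ} (hx : x ∈ Set.Ioo (0:ℝ) 1) (ht : t ∈ Set.Icc (0:ℝ) 1)
    (hne : t ≠ x) : gFun x t < 1 := by
  obtain ⟨hx0, hx1⟩ := hx
  rcases eq_or_lt_of_le ht.1 with h0 | h0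
  · simp [gFun, ← h0, Real.zero_rpow hx0.ne']
  rcases eq_or_lt_of_le ht.2 with h1 | h1
  · simp [gFun, h1, Real.zero_rpow (by linarith : (1 : ℝ) - x ≠ 0)]
  -- now t ∈ (0,1)
  have ha : (0:ℝ) < t / x := div_pos h0 hx0
  have hb : (0:ℝ) < (1 - t) / (1 - x) := div_pos (by linarith) (by linarith)
  have hab : t / x ≠ (1 - t) / (1 - x) := by
    intro h
    rw [div_eq_div_iff hx0.ne' (by linarith : (1:ℝ) - x ≠ 0)] at h
    apply hne; nlinarith
  have hsum : x • (t / x) + (1 - x) • ((1 - t) / (1 - x)) = 1 := by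
    have hx0' : x ≠ 0 := hx0.ne'
    have hx1' : (1:ℝ) - x ≠ 0 := by linarith
    simp only [smul_eq_mul]; field_simp; ring
  have hlog := strictConcaveOn_log_Ioi.2 (Set.mem_Ioi.2 ha) (Set.mem_Ioi.2 hb) hab hx0
    (by linarith : (0:ℝ) < 1 - x) (by ring)
  rw [hsum, Real.log_one] at hlog
  have : gFun x t = Real.exp (x * Real.log (t / x) + (1 - x) * Real.log ((1 - t) / (1 - x))) := by
    rw [Real.exp_add, gFun, Real.rpow_def_of_pos ha, Real.rpow_def_of_pos hb]
    ring_nf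
  rw [this]
  calc Real.exp _ < Real.exp 0 := Real.exp_lt_exp.2 (by simpa using hlog)
    _ = 1 := Real.exp_zero

lemma gFun_continuous {x : ℝ} (hx : x ∈ Set.Ioo (0:ℝ) 1) : Continuous (gFun x) := by
  apply Continuous.mul
  · exact (continuous_id.div_const x).rpow_const fun t => Or.inr hx.1.le
  · exact ((continuous_const.sub continuous_id).div_const (1 - x)).rpow_const
      fun t => Or.inr (by linarith [hx.2])

theorem stmt_3 (x d : ℝ) (hx : x ∈ Set.Ioo (0:ℝ) 1) (hd : 0 < d)
    (hd' : d < min x (1 - x)) :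
    ∃ B : ℝ, B < 1 ∧ ∀ α : ℕ, 0 < α →
      (∫ t in {t : ℝ | t ∈ Set.Icc (0:ℝ) 1 ∧ |t - x| > d}, gFun x t ^ α) ≤ B ^ α := by
  obtain ⟨hx0, hx1⟩ := hx
  have hdx : d < x := lt_of_lt_of_le hd' (min_le_left _ _)
  have hd1x : d < 1 - x := lt_of_lt_of_le hd' (min_le_right _ _)
  set K : Set ℝ := Set.Icc 0 1 ∩ {t | d ≤ |t - x|} with hK
  have hclosed : IsClosed ({t : ℝ | d ≤ |t - x|}) :=
    isClosed_le continuous_const ((continuous_id.sub continuous_const).abs)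
  have hKc : IsCompact K := isCompact_Icc.inter_right hclosed
  have hKne : K.Nonempty := ⟨0, ⟨le_refl 0, by norm_num⟩, by
    simp only [Set.mem_setOf_eq, zero_sub, abs_neg, abs_of_pos hx0]; linarith⟩
  obtain ⟨t₀, ht₀K, hmax⟩ := hKc.exists_isMaxOn hKne (gFun_continuous ⟨hx0, hx1⟩).continuousOn
  set M := gFun x t₀ with hM
  have ht₀ne : t₀ ≠ x := by
    intro h
    have := ht₀K.2
    rw [h] at this
    simp at this
    linarith
  have hM1 : M < 1 := gFun_lt_one ⟨hx0, hx1⟩ ht₀K.1 ht₀ne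
  have hM0 : 0 ≤ M := gFun_nonneg ⟨hx0, hx1⟩ ht₀K.1
  refine ⟨M, hM1, fun α hα => ?_⟩
  set S : Set ℝ := {t : ℝ | t ∈ Set.Icc (0:ℝ) 1 ∧ |t - x| > d} with hS
  have hSK : S ⊆ K := fun t ht => ⟨ht.1, le_of_lt ht.2⟩
  have hSsub : S ⊆ Set.Icc (0:ℝ) 1 := fun t ht => ht.1
  have hvol : volume S ≤ 1 := by
    calc volume S ≤ volume (Set.Icc (0:ℝ) 1) := measure_mono hSsub
      _ = 1 := by simp
  have hvolfin : volume S < ⊤ := lt_of_le_of_lt hvol (by norm_num)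
  have hbound : ∀ t ∈ S, ‖gFun x t ^ α‖ ≤ M ^ α := by
    intro t ht
    rw [Real.norm_eq_abs, abs_of_nonneg (pow_nonneg (gFun_nonneg ⟨hx0, hx1⟩ ht.1) α)]
    exact pow_le_pow_left₀ (gFun_nonneg ⟨hx0, hx1⟩ ht.1) (hmax (hSK ht)) α
  have hmeas : AEStronglyMeasurable (fun t => gFun x t ^ α) (volume.restrict S) :=
    ((gFun_continuous ⟨hx0, hx1⟩).pow α).aestronglyMeasurable
  calc (∫ t in S, gFun x t ^ α) ≤ ‖∫ t in S, gFun x t ^ α‖ := le_abs_self _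
    _ ≤ M ^ α * (volume S).toReal :=
        norm_setIntegral_le_of_norm_le_const hvolfin hbound
    _ ≤ M ^ α * 1 := by
        apply mul_le_mul_of_nonneg_left _ (pow_nonneg hM0 α)
        exact ENNReal.toReal_le_of_le_ofReal zero_le_one (by simpa using hvol)
    _ = M ^ α := mul_one _
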